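/- Let n ≥ 1 and let A be a real n×n matrix possessing the strong Perron–Frobenius property. Then for every positive integer p, the matrix A^p possesses the strong Perron–Frobenius property. -/

import Mathlib

open Polynomial Matrix

/-- The spectral radius of a real matrix: the maximum of the moduli of the complex
roots of its characteristic polynomial. -/
noncomputable def specRadius {n : ℕ} (A : Matrix (Fin n) (Fin n) ℝ) : ℝ :=
  (((A.charpoly.map (algebraMap ℝ ℂ)).roots.map (fun z => ‖z‖₊)).sup : NNReal)

/-- The strong Perron–Frobenius property for a real matrix. -/
def HasStrongPF {n : ℕ} (A : Matrix (Fin n) (Fin n) ℝ) : Prop :=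
  0 < specRadius A ∧
  (A.charpoly.map (algebraMap ℝ ℂ)).rootMultiplicity (specRadius A : ℂ) = 1 ∧
  (∃ x : Fin n → ℝ, (∀ i, 0 < x i) ∧ A.mulVec x = (specRadius A) • x) ∧
  (∀ μ ∈ (A.charpoly.map (algebraMap ℝ ℂ)).roots,
      μ ≠ (specRadius A : ℂ) → ‖μ‖ < specRadius A)

/-- Eventual positivity of a real matrix. -/
def EventuallyPos {n : ℕ} (A : Matrix (Fin n) (Fin n) ℝ) : Prop :=
  ∃ p : ℕ, ∀ k ≥ p, ∀ i j, 0 < (A ^ k) i j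

/-- Positive integer powers preserve the strong Perron–Frobenius property. -/

lemma prod_map_neg' (s : Multiset ℂ) (f : ℂ → ℂ) :
    (s.map (fun a => -(f a))).prod = (-1) ^ Multiset.card s * (s.map f).prod := by
  induction s using Multiset.induction with
  | empty => simp
  | cons a s ih => simp [ih, pow_succ]; ring

lemma prod_swap' (s t : Multiset ℂ) (f : ℂ → ℂ → ℂ) :
    (s.map (fun a => (t.map (f a)).prod)).prod
      = (t.map (fun b => (s.map (fun a => f a b)).prod)).prod := by
  induction s using Multiset.induction with
  | empty => simp
  | cons a s ih => simp [ih, ← Multiset.prod_map_mul]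

lemma charpoly_eval {n : ℕ} (M : Matrix (Fin n) (Fin n) ℂ) (r : ℂ) :
    M.charpoly.eval r = (Matrix.scalar (Fin n) r - M).det := by
  rw [Matrix.charpoly, eval_det, matPolyEquiv_charmatrix]
  simp

lemma roots_charpoly_pow {n : ℕ} (B : Matrix (Fin n) (Fin n) ℂ) (p : ℕ) (hp : 0 < p) :
    (B ^ p).charpoly.roots = B.charpoly.roots.map (fun z => z ^ p) := by
  set s := B.charpoly.roots with hs
  have hcard_s : Multiset.card s = n := by
    have := Polynomial.splits_iff_card_roots.mp (IsAlgClosed.splits (k := ℂ) B.charpoly)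
    rw [← hs] at this
    rw [this, B.charpoly_natDegree_eq_dim, Fintype.card_fin]
  have key : (B ^ p).charpoly = ((s.map (fun z => z ^ p)).map (fun a => X - C a)).prod := by
    apply Polynomial.funext
    intro Y
    obtain ⟨y, hy⟩ := IsAlgClosed.exists_pow_nat_eq Y hp
    -- roots of X^p - C Y
    set t := (X ^ p - C Y : ℂ[X]).roots with ht
    have hmonic : (X ^ p - C Y : ℂ[X]).Monic := monic_X_pow_sub_C Y hp.ne'
    have hcard_t : Multiset.card t = p := by
      have h2 := Polynomial.splits_iff_card_roots.mp
        (IsAlgClosed.splits (k := ℂ) (X ^ p - C Y))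
      have hd : (X ^ p - C Y : ℂ[X]).natDegree = p := by
        simp [Polynomial.natDegree_X_pow_sub_C (n := p) (r := Y)]
      rw [hd] at h2; rw [← ht] at h2; exact h2
    have hfact : (X ^ p - C Y : ℂ[X]) = (t.map (fun z => X - C z)).prod :=
      (IsAlgClosed.splits _).eq_prod_roots_of_monic hmonic
    -- eval of factor prods
    have hteval : ∀ μ : ℂ, (t.map (fun z => μ - z)).prod = μ ^ p - Y := by
      intro μ
      have := congrArg (Polynomial.eval μ) hfact
      simpa [Polynomial.eval_multiset_prod, Multiset.map_map] using this.symm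
    have hseval : ∀ z : ℂ, (s.map (fun μ => z - μ)).prod = B.charpoly.eval z := by
      intro z
      have hBfact : B.charpoly = (s.map (fun μ => X - C μ)).prod :=
        (IsAlgClosed.splits _).eq_prod_roots_of_monic B.charpoly_monic
      rw [hBfact]
      simp [Polynomial.eval_multiset_prod, Multiset.map_map]
    -- key matrix identity : B^p - scalar Y = prod over t of (B - scalar z)
    obtain ⟨l, hl⟩ : ∃ l : List ℂ, (l : Multiset ℂ) = t := ⟨t.toList, t.coe_toList⟩
    have hmat : B ^ p - Matrix.scalar (Fin n) Y
        = (l.map (fun z => B - Matrix.scalar (Fin n) z)).prod := by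
      have h1 : aeval B (X ^ p - C Y : ℂ[X]) = B ^ p - Matrix.scalar (Fin n) Y := by
        simp [Matrix.scalar, algebraMap]
      rw [← h1, hfact, ← hl]
      rw [show ((l : Multiset ℂ).map (fun z => X - C z)).prod
          = (l.map (fun z => (X : ℂ[X]) - C z)).prod from by simp]
      rw [map_list_prod, List.map_map]
      congr 1
      ext z
      simp [Matrix.scalar, algebraMap]
    have hdetprod : (B ^ p - Matrix.scalar (Fin n) Y).det
        = (t.map (fun z => (B - Matrix.scalar (Fin n) z).det)).prod := by
      rw [hmat, ← Matrix.coe_detMonoidHom, MonoidHom.map_list_prod, List.map_map, ← hl]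
      simp [Function.comp_def]
    -- det (B - scalar z) = prod over s of (μ - z)
    have hdet1 : ∀ z : ℂ, (B - Matrix.scalar (Fin n) z).det
        = (s.map (fun μ => μ - z)).prod := by
      intro z
      rw [show B - Matrix.scalar (Fin n) z = -(Matrix.scalar (Fin n) z - B) from
        (neg_sub _ _).symm, Matrix.det_neg, ← charpoly_eval, ← hseval z, Fintype.card_fin]
      rw [Multiset.map_congr rfl (fun μ _ => show μ - z = -(z - μ) from (neg_sub _ _).symm)]
      rw [prod_map_neg', hcard_s]
    -- put it together
    have lhs : ((B ^ p).charpoly).eval Y = (-1) ^ n * (s.map (fun μ => μ ^ p - Y)).prod := by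
      rw [charpoly_eval]
      rw [show Matrix.scalar (Fin n) Y - B ^ p = -(B ^ p - Matrix.scalar (Fin n) Y) from
        (neg_sub _ _).symm, Matrix.det_neg, Fintype.card_fin, hdetprod]
      congr 1
      calc (t.map (fun z => (B - Matrix.scalar (Fin n) z).det)).prod
          = (t.map (fun z => (s.map (fun μ => μ - z)).prod)).prod := by
            rw [Multiset.map_congr rfl (fun z _ => hdet1 z)]
        _ = (s.map (fun μ => (t.map (fun z => μ - z)).prod)).prod :=
            (prod_swap' s t (fun μ z => μ - z)).symm
        _ = (s.map (fun μ => μ ^ p - Y)).prod := by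
            rw [Multiset.map_congr rfl (fun μ _ => hteval μ)]
    rw [lhs, Polynomial.eval_multiset_prod]
    simp only [Multiset.map_map, Function.comp]
    rw [show (s.map (fun μ => Polynomial.eval Y ((X : ℂ[X]) - C (μ ^ p)))) =
        s.map (fun μ => -(μ ^ p - Y)) from
        Multiset.map_congr rfl (fun μ _ => by simp [neg_sub])]
    rw [prod_map_neg', hcard_s]
  rw [key, Polynomial.roots_multiset_prod_X_sub_C]

lemma sup_map_pow (s : Multiset NNReal) (p : ℕ) (hp : 0 < p) :
    (s.map (fun a => a ^ p)).sup = s.sup ^ p := by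
  induction s using Multiset.induction with
  | empty => simp [zero_pow hp.ne']
  | cons a s ih =>
      simp only [Multiset.map_cons, Multiset.sup_cons, ih]
      rcases le_total a s.sup with h | h
      · rw [sup_eq_right.mpr h, sup_eq_right.mpr (pow_le_pow_left₀ (zero_le (a := a)) h p)]
      · rw [sup_eq_left.mpr h, sup_eq_left.mpr (pow_le_pow_left₀ zero_le h p)]


lemma mulVec_pow_eig {n : ℕ} (A : Matrix (Fin n) (Fin n) ℝ) (x : Fin n → ℝ) (c : ℝ)
    (h : A.mulVec x = c • x) (p : ℕ) : (A ^ p).mulVec x = (c ^ p) • x := by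
  induction p with
  | zero => simp [Matrix.one_mulVec]
  | succ k ih =>
      rw [pow_succ, ← Matrix.mulVec_mulVec, h, Matrix.mulVec_smul, ih,
        smul_smul, ← pow_succ']

theorem strongPF_pow {n : ℕ} (hn : 1 ≤ n) (A : Matrix (Fin n) (Fin n) ℝ)
    (hA : HasStrongPF A) (p : ℕ) (hp : 0 < p) :
    HasStrongPF (A ^ p) := by
  obtain ⟨hpos, hmult, ⟨x, hxpos, hxeig⟩, hdom⟩ := hA
  set f := algebraMap ℝ ℂ
  have hroots : ((A ^ p).charpoly.map f).roots
      = (A.charpoly.map f).roots.map (fun z => z ^ p) := by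
    have h1 : (A ^ p).charpoly.map f = ((A.map f) ^ p).charpoly := by
      rw [← Matrix.charpoly_map]
      congr 1
      exact (map_pow (RingHom.mapMatrix f) A p)
    rw [h1, roots_charpoly_pow _ p hp, Matrix.charpoly_map]
  -- spectral radius of the power
  have hspec : specRadius (A ^ p) = (specRadius A) ^ p := by
    unfold specRadius
    rw [hroots, Multiset.map_map, ← NNReal.coe_pow]
    congr 1
    rw [show ((A.charpoly.map f).roots.map ((fun z => ‖z‖₊) ∘ fun z => z ^ p))
        = ((A.charpoly.map f).roots.map (fun z => ‖z‖₊)).map (fun a => a ^ p) from by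
      rw [Multiset.map_map]; exact Multiset.map_congr rfl (fun z _ => by simp)]
    exact sup_map_pow _ p hp
  have hposA : (0:ℝ) < specRadius A := hpos
  have hcast : ((specRadius (A ^ p) : ℝ) : ℂ) = ((specRadius A : ℝ) : ℂ) ^ p := by
    rw [hspec]; push_cast; ring
  -- key injectivity on roots
  have hkey : ∀ μ ∈ (A.charpoly.map f).roots,
      (μ ^ p = ((specRadius A : ℝ) : ℂ) ^ p ↔ μ = ((specRadius A : ℝ) : ℂ)) := by
    intro μ hμ
    constructor
    · intro h
      by_contra hne
      have habs := hdom μ hμ hne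
      have h1 : ‖μ ^ p‖ < (specRadius A) ^ p := by
        rw [norm_pow]
        exact pow_lt_pow_left₀ habs (norm_nonneg μ) hp.ne'
      rw [h] at h1
      simp only [norm_pow, Complex.norm_real, Real.norm_eq_abs, abs_of_pos hposA] at h1
      exact lt_irrefl _ h1
    · intro h; rw [h]
  refine ⟨?_, ?_, ?_, ?_⟩
  · rw [hspec]; exact pow_pos hposA p
  · -- multiplicity
    rw [hcast, ← Polynomial.count_roots, hroots, Multiset.count_map]
    rw [Multiset.filter_congr (fun μ hμ => eq_comm.trans ((hkey μ hμ).trans eq_comm))]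
    rw [← Multiset.count_eq_card_filter_eq, Polynomial.count_roots]
    exact hmult
  · exact ⟨x, hxpos, by rw [hspec]; exact mulVec_pow_eig A x _ hxeig p⟩
  · intro μ' hμ' hne
    rw [hroots] at hμ'
    obtain ⟨μ, hμ, rfl⟩ := Multiset.mem_map.mp hμ'
    rw [hcast] at hne
    have hμne : μ ≠ ((specRadius A : ℝ) : ℂ) := fun h => hne (by rw [h])
    have habs := hdom μ hμ hμne
    rw [hspec, norm_pow]
    exact pow_lt_pow_left₀ habs (norm_nonneg μ) hp.ne'
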